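/- Let u and v be independent standard Gaussian random vectors in ℝᵖ (each with i.i.d. N(0,1) coordinates) and let M ∈ ℝ^{p×p}. Then E[(uᵀ M v)⁴] = 3 (tr(M Mᵀ))² + 6 tr((M Mᵀ)²), and in particular E[(uᵀ M v)⁴] ≤ 9 ‖M‖_F⁴. -/

import Mathlib

open MeasureTheory ProbabilityTheory Matrix Finset

noncomputable section

/-- Frobenius norm of a real matrix. -/
def frobNorm {m k : Type*} [Fintype m] [Fintype k] (M : Matrix m k ℝ) : ℝ :=
  Real.sqrt (∑ i, ∑ j, M i j ^ 2)

open Real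
open scoped NNReal ENNReal


noncomputable section
namespace GbAux

lemma pdf_eq (x : ℝ) :
    gaussianPDFReal 0 1 x = (Real.sqrt (2 * π))⁻¹ * Real.exp (-2⁻¹ * x ^ 2) := by
  simp only [gaussianPDFReal, NNReal.coe_one, mul_one, sub_zero]
  rw [show -x ^ 2 / (2:ℝ) = -2⁻¹ * x ^ 2 by ring]

lemma g1_eq : gaussianReal 0 1 =
    volume.withDensity (fun x => ((Real.toNNReal (gaussianPDFReal 0 1 x) : ℝ≥0) : ℝ≥0∞)) := by
  rw [gaussianReal_of_var_ne_zero 0 one_ne_zero]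
  rfl

lemma integral_g1 (f : ℝ → ℝ) :
    ∫ x, f x ∂(gaussianReal 0 1) = ∫ x, gaussianPDFReal 0 1 x * f x := by
  rw [g1_eq, integral_withDensity_eq_integral_smul
    ((measurable_gaussianPDFReal 0 1).real_toNNReal) f]
  congr 1 with x
  simp [NNReal.smul_def, Real.coe_toNNReal _ (gaussianPDFReal_nonneg 0 1 x)]

lemma integrable_pow_g1 (n : ℕ) :
    Integrable (fun x => x ^ n) (gaussianReal 0 1) := by
  rw [g1_eq, integrable_withDensity_iff_integrable_smul
    ((measurable_gaussianPDFReal 0 1).real_toNNReal)]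
  have h := (integrable_rpow_mul_exp_neg_mul_sq (b := 2⁻¹) (by norm_num)
    (s := (n : ℝ)) (neg_one_lt_zero.trans_le (Nat.cast_nonneg n))).const_mul ((Real.sqrt (2 * π))⁻¹)
  refine h.congr (Filter.Eventually.of_forall fun x => ?_)
  show (Real.sqrt (2*π))⁻¹ * (x ^ (n:ℝ) * rexp (-2⁻¹ * x^2)) = (gaussianPDFReal 0 1 x).toNNReal • x ^ n
  rw [NNReal.smul_def, Real.coe_toNNReal _ (gaussianPDFReal_nonneg 0 1 x), pdf_eq,
    Real.rpow_natCast, smul_eq_mul]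
  ring

end GbAux

namespace GbAux2
open GbAux

lemma J_odd {n : ℕ} (hn : Odd n) : ∫ x : ℝ, x ^ n * rexp (-2⁻¹ * x ^ 2) = 0 := by
  have h := integral_neg_eq_self (fun x : ℝ => x ^ n * rexp (-2⁻¹ * x ^ 2)) volume
  have h2 : ∀ x : ℝ, (-x) ^ n * rexp (-2⁻¹ * (-x) ^ 2)
      = -(x ^ n * rexp (-2⁻¹ * x ^ 2)) := fun x => by
    rw [hn.neg_pow, neg_sq, neg_mul]
  simp only [h2, integral_neg] at h
  linarith

lemma J_even (n : ℕ) (hn : Even n) : ∫ x : ℝ, x ^ n * rexp (-2⁻¹ * x ^ 2)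
    = 2 * ((2⁻¹ : ℝ) ^ (-((n : ℝ) + 1) / 2) * (1 / 2) * Real.Gamma (((n : ℝ) + 1) / 2)) := by
  have h1 : ∀ x : ℝ, |x| ^ n * rexp (-2⁻¹ * |x| ^ 2) = x ^ n * rexp (-2⁻¹ * x ^ 2) :=
    fun x => by rw [hn.pow_abs, sq_abs]
  calc ∫ x : ℝ, x ^ n * rexp (-2⁻¹ * x ^ 2)
      = ∫ x : ℝ, |x| ^ n * rexp (-2⁻¹ * |x| ^ 2) := by
        exact (integral_congr_ae (Filter.Eventually.of_forall fun x => (h1 x))).symm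
    _ = 2 * ∫ x in Set.Ioi (0:ℝ), x ^ n * rexp (-2⁻¹ * x ^ 2) :=
        integral_comp_abs (f := fun x => x ^ n * rexp (-2⁻¹ * x ^ 2))
    _ = 2 * ∫ x in Set.Ioi (0:ℝ), x ^ (n : ℝ) * rexp (-2⁻¹ * x ^ (2:ℝ)) := by
        congr 1
        refine setIntegral_congr_fun measurableSet_Ioi fun x _ => ?_
        rw [Real.rpow_natCast, show (2:ℝ) = ((2:ℕ):ℝ) by norm_num, Real.rpow_natCast]
    _ = _ := by
        rw [integral_rpow_mul_exp_neg_mul_rpow two_pos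
          (neg_one_lt_zero.trans_le (Nat.cast_nonneg n)) (by norm_num)]

lemma rpow_half_inv_neg (k : ℝ) : (2⁻¹ : ℝ) ^ (-k / 2 : ℝ) = 2 ^ (k / 2 : ℝ) := by
  rw [Real.inv_rpow (by norm_num : (0:ℝ) ≤ 2), ← Real.rpow_neg (by norm_num : (0:ℝ) ≤ 2)]
  rw [neg_div, neg_neg]

lemma sqrt2pi_ne : Real.sqrt (2 * π) ≠ 0 := by
  positivity

lemma mom0 : ∫ x, x ^ 0 ∂(gaussianReal 0 1) = 1 := by simp

lemma mom1 : ∫ x, x ^ 1 ∂(gaussianReal 0 1) = 0 := by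
  rw [integral_g1]
  have : ∀ x : ℝ, gaussianPDFReal 0 1 x * x ^ 1
      = (Real.sqrt (2*π))⁻¹ * (x ^ 1 * rexp (-2⁻¹ * x ^ 2)) := fun x => by
    rw [pdf_eq]; ring
  simp only [this]
  rw [integral_const_mul, J_odd odd_one, mul_zero]

lemma mom3 : ∫ x, x ^ 3 ∂(gaussianReal 0 1) = 0 := by
  rw [integral_g1]
  have : ∀ x : ℝ, gaussianPDFReal 0 1 x * x ^ 3
      = (Real.sqrt (2*π))⁻¹ * (x ^ 3 * rexp (-2⁻¹ * x ^ 2)) := fun x => by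
    rw [pdf_eq]; ring
  simp only [this]
  rw [integral_const_mul, J_odd ⟨1, by norm_num⟩, mul_zero]

lemma mom2 : ∫ x, x ^ 2 ∂(gaussianReal 0 1) = 1 := by
  rw [integral_g1]
  have : ∀ x : ℝ, gaussianPDFReal 0 1 x * x ^ 2
      = (Real.sqrt (2*π))⁻¹ * (x ^ 2 * rexp (-2⁻¹ * x ^ 2)) := fun x => by
    rw [pdf_eq]; ring
  simp only [this]
  rw [integral_const_mul, J_even 2 ⟨1, rfl⟩]
  have hg : Real.Gamma ((((2:ℕ):ℝ) + 1) / 2) = Real.sqrt π / 2 := by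
    rw [show ((((2:ℕ):ℝ)) + 1)/2 = 1/2 + 1 by norm_num, Real.Gamma_add_one (by norm_num),
      Real.Gamma_one_half_eq]
    ring
  have hr : (2⁻¹:ℝ) ^ (-(((2:ℕ):ℝ) + 1) / 2 : ℝ) = 2 * Real.sqrt 2 := by
    rw [rpow_half_inv_neg, show ((((2:ℕ):ℝ)) + 1)/2 = 1 + 1/2 by norm_num,
      Real.rpow_add two_pos, Real.rpow_one, ← Real.sqrt_eq_rpow]
  rw [hg, hr, show (2:ℝ) * (2 * Real.sqrt 2 * (1/2) * (Real.sqrt π / 2))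
      = Real.sqrt 2 * Real.sqrt π by ring,
    ← Real.sqrt_mul (by norm_num : (0:ℝ) ≤ 2), inv_mul_cancel₀ sqrt2pi_ne]

lemma mom4 : ∫ x, x ^ 4 ∂(gaussianReal 0 1) = 3 := by
  rw [integral_g1]
  have : ∀ x : ℝ, gaussianPDFReal 0 1 x * x ^ 4
      = (Real.sqrt (2*π))⁻¹ * (x ^ 4 * rexp (-2⁻¹ * x ^ 2)) := fun x => by
    rw [pdf_eq]; ring
  simp only [this]
  rw [integral_const_mul, J_even 4 ⟨2, rfl⟩]
  have g32 : Real.Gamma ((3:ℝ)/2) = Real.sqrt π / 2 := by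
    rw [show (3:ℝ)/2 = 1/2 + 1 by norm_num, Real.Gamma_add_one (by norm_num),
      Real.Gamma_one_half_eq]
    ring
  have hg : Real.Gamma ((((4:ℕ):ℝ) + 1) / 2) = 3 * Real.sqrt π / 4 := by
    rw [show ((((4:ℕ):ℝ)) + 1)/2 = 3/2 + 1 by norm_num, Real.Gamma_add_one (by norm_num), g32]
    ring
  have h22 : (2:ℝ) ^ (((2:ℕ)):ℝ) = 4 := by
    rw [Real.rpow_natCast]; norm_num
  have hr : (2⁻¹:ℝ) ^ (-(((4:ℕ):ℝ) + 1) / 2 : ℝ) = 4 * Real.sqrt 2 := by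
    rw [rpow_half_inv_neg, show ((((4:ℕ):ℝ)) + 1)/2 = ((2:ℕ):ℝ) + 1/2 by norm_num,
      Real.rpow_add two_pos, h22, ← Real.sqrt_eq_rpow]
  rw [hg, hr, show (2:ℝ) * (4 * Real.sqrt 2 * (1/2) * (3 * Real.sqrt π / 4))
      = 3 * (Real.sqrt 2 * Real.sqrt π) by ring,
    ← Real.sqrt_mul (by norm_num : (0:ℝ) ≤ 2), ← mul_assoc, mul_comm _ (3:ℝ), mul_assoc,
    inv_mul_cancel₀ sqrt2pi_ne, mul_one]

end GbAux2

namespace GbPi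
open GbAux GbAux2

theorem integrable_pi_prod {n : ℕ} (ν : Fin n → Measure ℝ) [∀ i, SigmaFinite (ν i)]
    (f : (i : Fin n) → ℝ → ℝ) (hf : ∀ i, Integrable (f i) (ν i)) :
    Integrable (fun x : (Fin n) → ℝ => ∏ i, f i (x i)) (Measure.pi ν) := by
  induction n with
  | zero =>
      simp only [Finset.univ_eq_empty, Finset.prod_empty, integrable_const_iff,
        one_ne_zero, Measure.pi_empty_univ, ENNReal.one_lt_top, or_true, false_or]
      exact ⟨by rw [Measure.pi_empty_univ]; exact ENNReal.one_lt_top⟩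
  | succ n n_ih =>
      have := ((measurePreserving_piFinSuccAbove ν 0).symm)
      rw [← this.integrable_comp_emb (MeasurableEquiv.measurableEmbedding _)]
      simp_rw [MeasurableEquiv.piFinSuccAbove_symm_apply, Fin.insertNthEquiv,
        Fin.prod_univ_succ, Fin.insertNth_zero]
      simp only [Fin.zero_succAbove, cast_eq, Function.comp_def, Fin.cons_zero, Fin.cons_succ,
        Equiv.coe_fn_mk]
      have : Integrable (fun (x : Fin n → ℝ) ↦ ∏ j, f (Fin.succ j) (x j))
          (Measure.pi fun j => ν (Fin.succ j)) :=
        n_ih (fun j => ν (Fin.succ j)) (fun j => f (Fin.succ j)) (fun i ↦ hf _)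
      exact Integrable.mul_prod (hf 0) this

theorem integral_pi_prod {n : ℕ} (ν : Fin n → Measure ℝ) [∀ i, SigmaFinite (ν i)]
    (f : (i : Fin n) → ℝ → ℝ) :
    ∫ x : Fin n → ℝ, ∏ i, f i (x i) ∂(Measure.pi ν) = ∏ i, ∫ t, f i t ∂(ν i) := by
  induction n with
  | zero =>
      simp only [Finset.univ_eq_empty, Finset.prod_empty, integral_const,
        measureReal_def, Measure.pi_empty_univ, ENNReal.toReal_one, smul_eq_mul, mul_one, one_smul]
  | succ n n_ih =>
      calc
        _ = ∫ x : ℝ × (Fin n → ℝ),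
            f 0 x.1 * ∏ i : Fin n, f (Fin.succ i) (x.2 i)
              ∂((ν 0).prod (Measure.pi fun j => ν (Fin.succ j))) := by
          rw [← ((measurePreserving_piFinSuccAbove ν 0).symm).integral_comp']
          simp_rw [MeasurableEquiv.piFinSuccAbove_symm_apply, Fin.insertNthEquiv,
            Fin.prod_univ_succ, Fin.insertNth_zero, Equiv.coe_fn_mk, Fin.cons_succ,
            Fin.zero_succAbove, cast_eq, Fin.cons_zero]
        _ = (∫ t, f 0 t ∂(ν 0)) * ∏ i : Fin n, ∫ t, f (Fin.succ i) t ∂(ν (Fin.succ i)) := by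
          rw [← n_ih (fun j => ν (Fin.succ j)) (fun j => f (Fin.succ j)), ← integral_prod_mul]
        _ = ∏ i, ∫ t, f i t ∂(ν i) := by rw [Fin.prod_univ_succ]

end GbPi

namespace GbIss
open GbAux GbAux2 GbPi

lemma mom1' : ∫ x, x ∂(gaussianReal 0 1) = 0 := by simpa using mom1

theorem isserlis4 {p : ℕ} (i j k l : Fin p) :
    ∫ x : Fin p → ℝ, x i * x j * x k * x l ∂(Measure.pi fun _ : Fin p => gaussianReal 0 1)
      = (if i = j then (1:ℝ) else 0) * (if k = l then 1 else 0)
      + (if i = k then (1:ℝ) else 0) * (if j = l then 1 else 0)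
      + (if i = l then (1:ℝ) else 0) * (if j = k then 1 else 0) := by
  have key : ∀ x : Fin p → ℝ, x i * x j * x k * x l
      = ∏ a, x a ^ ((if i = a then 1 else 0) + (if j = a then 1 else 0)
          + (if k = a then 1 else 0) + (if l = a then 1 else 0)) := by
    intro x
    simp only [pow_add, Finset.prod_mul_distrib, pow_ite, pow_one, pow_zero,
      Finset.prod_ite_eq, Finset.mem_univ, if_true]
  simp only [key]
  rw [integral_pi_prod (fun _ => gaussianReal 0 1)
    (fun a t => t ^ ((if i = a then 1 else 0) + (if j = a then 1 else 0)
      + (if k = a then 1 else 0) + (if l = a then 1 else 0)))]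
  by_cases hj : j = i
  · by_cases hk : k = i
    · by_cases hl : l = i
      · -- L1 : all four equal
        have h1 : ∀ a : Fin p, (∫ t : ℝ, t ^ ((if i = a then 1 else 0) + (if j = a then 1 else 0)
            + (if k = a then 1 else 0) + (if l = a then 1 else 0)) ∂(gaussianReal 0 1))
            = if i = a then (3:ℝ) else 1 := by
          intro a
          by_cases h : i = a
          · simp only [hj, hk, hl, h, eq_self_iff_true, if_true]
            norm_num [mom4]
          · simp only [hj, hk, hl, h, if_false]
            simp
        rw [Finset.prod_congr rfl fun a _ => h1 a, Finset.prod_ite_eq]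
        simp [hj, hk, hl]
        norm_num
      · -- L2 : i = j = k, l different
        have hil : ¬ i = l := fun h => hl h.symm
        have hjl : ¬ j = l := by rw [hj]; exact hil
        have hkl : ¬ k = l := by rw [hk]; exact hil
        have hz : (∫ t : ℝ, t ^ ((if i = l then 1 else 0) + (if j = l then 1 else 0)
            + (if k = l then 1 else 0) + (if l = l then 1 else 0)) ∂(gaussianReal 0 1)) = 0 := by
          simp only [hil, hjl, hkl, eq_self_iff_true, if_true, if_false]
          norm_num [mom1']
        rw [Finset.prod_eq_zero (Finset.mem_univ l) hz]
        simp [hj, hk, hil]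
    · by_cases hl : l = k
      · -- L3 : i = j, k = l, i ≠ k  (pair (i,k))
        have h1 : ∀ a : Fin p, (∫ t : ℝ, t ^ ((if i = a then 1 else 0) + (if j = a then 1 else 0)
            + (if k = a then 1 else 0) + (if l = a then 1 else 0)) ∂(gaussianReal 0 1)) = 1 := by
          intro a
          by_cases hb : i = a
          · have hc : ¬ k = a := fun h => hk (h.trans hb.symm)
            simp only [hj, hl, hb, hc, eq_self_iff_true, if_true, if_false]
            norm_num [mom2]
          · by_cases hc : k = a
            · simp only [hj, hl, hb, hc, eq_self_iff_true, if_true, if_false]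
              norm_num [mom2]
            · simp only [hj, hl, hb, hc, if_false]
              simp
        rw [Finset.prod_eq_one fun a _ => h1 a]
        have hik : ¬ i = k := fun h => hk h.symm
        simp [hj, hl, hik]
      · -- L45 : i = j, k ∉ {i}, l ≠ k
        have hik : ¬ i = k := fun h => hk h.symm
        have hjk : ¬ j = k := by rw [hj]; exact hik
        have hlk : ¬ l = k := hl
        have hz : (∫ t : ℝ, t ^ ((if i = k then 1 else 0) + (if j = k then 1 else 0)
            + (if k = k then 1 else 0) + (if l = k then 1 else 0)) ∂(gaussianReal 0 1)) = 0 := by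
          simp only [hik, hjk, hlk, eq_self_iff_true, if_true, if_false]
          norm_num [mom1']
        rw [Finset.prod_eq_zero (Finset.mem_univ k) hz]
        have hkl : ¬ k = l := fun h => hl h.symm
        simp [hj, hik, hjk, hkl]
  · by_cases hk : k = i
    · by_cases hl : l = j
      · -- L6 : k = i, l = j, i ≠ j  (pair (i,j))
        have hij : ¬ i = j := fun h => hj h.symm
        have h1 : ∀ a : Fin p, (∫ t : ℝ, t ^ ((if i = a then 1 else 0) + (if j = a then 1 else 0)
            + (if k = a then 1 else 0) + (if l = a then 1 else 0)) ∂(gaussianReal 0 1)) = 1 := by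
          intro a
          by_cases hb : i = a
          · have hc : ¬ j = a := fun h => hj (h.trans hb.symm)
            simp only [hk, hl, hb, hc, eq_self_iff_true, if_true, if_false]
            norm_num [mom2]
          · by_cases hc : j = a
            · simp only [hk, hl, hb, hc, eq_self_iff_true, if_true, if_false]
              norm_num [mom2]
            · simp only [hk, hl, hb, hc, if_false]
              simp
        rw [Finset.prod_eq_one fun a _ => h1 a]
        simp [hk, hl, hij]
      · -- L7 : k = i, l ≠ j, j ≠ i : witness j
        have hij : ¬ i = j := fun h => hj h.symm
        have hkj : ¬ k = j := by rw [hk]; exact hij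
        have hlj : ¬ l = j := hl
        have hz : (∫ t : ℝ, t ^ ((if i = j then 1 else 0) + (if j = j then 1 else 0)
            + (if k = j then 1 else 0) + (if l = j then 1 else 0)) ∂(gaussianReal 0 1)) = 0 := by
          simp only [hij, hkj, hlj, eq_self_iff_true, if_true, if_false]
          norm_num [mom1']
        rw [Finset.prod_eq_zero (Finset.mem_univ j) hz]
        have hjl : ¬ j = l := fun h => hl h.symm
        simp [hij, hk, hjl, hj]
    · by_cases hk2 : k = j
      · by_cases hl : l = i
        · -- L8a : k = j, l = i, i ≠ j  (pair (i,j))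
          have hij : ¬ i = j := fun h => hj h.symm
          have h1 : ∀ a : Fin p, (∫ t : ℝ, t ^ ((if i = a then 1 else 0) + (if j = a then 1 else 0)
              + (if k = a then 1 else 0) + (if l = a then 1 else 0)) ∂(gaussianReal 0 1)) = 1 := by
            intro a
            by_cases hb : i = a
            · have hc : ¬ j = a := fun h => hj (h.trans hb.symm)
              simp only [hk2, hl, hb, hc, eq_self_iff_true, if_true, if_false]
              norm_num [mom2]
            · by_cases hc : j = a
              · simp only [hk2, hl, hb, hc, eq_self_iff_true, if_true, if_false]
                norm_num [mom2]
              · simp only [hk2, hl, hb, hc, if_false]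
                simp
          rw [Finset.prod_eq_one fun a _ => h1 a]
          have hik : ¬ i = k := fun h => hk (h.symm ▸ rfl)
          simp [hij, hk2, hl, hik]
        · -- L8b : k = j, l ≠ i : witness i
          have hji : ¬ j = i := hj
          have hki : ¬ k = i := hk
          have hli : ¬ l = i := hl
          have hz : (∫ t : ℝ, t ^ ((if i = i then 1 else 0) + (if j = i then 1 else 0)
              + (if k = i then 1 else 0) + (if l = i then 1 else 0)) ∂(gaussianReal 0 1)) = 0 := by
            simp only [hji, hki, hli, eq_self_iff_true, if_true, if_false]
            norm_num [mom1']
          rw [Finset.prod_eq_zero (Finset.mem_univ i) hz]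
          have hij : ¬ i = j := fun h => hj h.symm
          have hik : ¬ i = k := fun h => hk h.symm
          have hil : ¬ i = l := fun h => hl h.symm
          simp [hij, hik, hil]
      · by_cases hl : l = k
        · -- L9a : l = k, k ∉ {i,j} : witness i
          have hji : ¬ j = i := hj
          have hki : ¬ k = i := hk
          have hli : ¬ l = i := by rw [hl]; exact hki
          have hz : (∫ t : ℝ, t ^ ((if i = i then 1 else 0) + (if j = i then 1 else 0)
              + (if k = i then 1 else 0) + (if l = i then 1 else 0)) ∂(gaussianReal 0 1)) = 0 := by
            simp only [hji, hki, hli, eq_self_iff_true, if_true, if_false]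
            norm_num [mom1']
          rw [Finset.prod_eq_zero (Finset.mem_univ i) hz]
          have hij : ¬ i = j := fun h => hj h.symm
          have hik : ¬ i = k := fun h => hk h.symm
          have hil : ¬ i = l := fun h => hli h.symm
          simp [hij, hik, hil]
        · -- L9b : k ∉ {i,j}, l ≠ k : witness k
          have hik : ¬ i = k := fun h => hk h.symm
          have hjk : ¬ j = k := fun h => hk2 h.symm
          have hlk : ¬ l = k := hl
          have hz : (∫ t : ℝ, t ^ ((if i = k then 1 else 0) + (if j = k then 1 else 0)
              + (if k = k then 1 else 0) + (if l = k then 1 else 0)) ∂(gaussianReal 0 1)) = 0 := by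
            simp only [hik, hjk, hlk, eq_self_iff_true, if_true, if_false]
            norm_num [mom1']
          rw [Finset.prod_eq_zero (Finset.mem_univ k) hz]
          have hkl : ¬ k = l := fun h => hl h.symm
          simp [hik, hjk, hkl]

end GbIss

namespace GbMain
open GbAux GbAux2 GbPi GbIss

/-- Wick pairing weight. -/
def Wd {p : ℕ} (i j k l : Fin p) : ℝ :=
  (if i = j then 1 else 0) * (if k = l then 1 else 0)
  + (if i = k then 1 else 0) * (if j = l then 1 else 0)
  + (if i = l then 1 else 0) * (if j = k then 1 else 0)

lemma four_eq_prod {p : ℕ} (i j k l : Fin p) (x : Fin p → ℝ) :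
    x i * x j * x k * x l
      = ∏ a, x a ^ ((if i = a then 1 else 0) + (if j = a then 1 else 0)
          + (if k = a then 1 else 0) + (if l = a then 1 else 0)) := by
  simp only [pow_add, Finset.prod_mul_distrib, pow_ite, pow_one, pow_zero,
    Finset.prod_ite_eq, Finset.mem_univ, if_true]

lemma integrable_four {p : ℕ} (i j k l : Fin p) :
    Integrable (fun x : Fin p → ℝ => x i * x j * x k * x l)
      (Measure.pi fun _ : Fin p => gaussianReal 0 1) := by
  have h := integrable_pi_prod (fun _ : Fin p => gaussianReal 0 1)
    (fun a t => t ^ ((if i = a then 1 else 0) + (if j = a then 1 else 0)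
      + (if k = a then 1 else 0) + (if l = a then 1 else 0)))
    (fun a => integrable_pow_g1 _)
  exact h.congr (Filter.Eventually.of_forall fun x => (four_eq_prod i j k l x).symm)

lemma isserlis4' {p : ℕ} (i j k l : Fin p) :
    ∫ x : Fin p → ℝ, x i * x j * x k * x l ∂(Measure.pi fun _ : Fin p => gaussianReal 0 1)
      = Wd i j k l := isserlis4 i j k l

lemma dot_eq {p : ℕ} (M : Matrix (Fin p) (Fin p) ℝ) (x y : Fin p → ℝ) :
    x ⬝ᵥ M *ᵥ y = ∑ q : Fin p × Fin p, M q.1 q.2 * x q.1 * y q.2 := by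
  rw [Fintype.sum_prod_type]
  simp only [dotProduct, Matrix.mulVec, Finset.mul_sum]
  exact Finset.sum_congr rfl fun i _ => Finset.sum_congr rfl fun j _ => by ring

lemma sum_pow_four {ι : Type*} [Fintype ι] (f : ι → ℝ) :
    (∑ a, f a) ^ 4 = ∑ a, ∑ b, ∑ c, ∑ d, f a * (f b * (f c * f d)) := by
  simp only [← Finset.mul_sum, ← Finset.sum_mul]
  ring

lemma integral_term {p : ℕ} (M : Matrix (Fin p) (Fin p) ℝ) (q1 q2 q3 q4 : Fin p × Fin p) :
    ∫ z : (Fin p → ℝ) × (Fin p → ℝ),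
        (M q1.1 q1.2 * z.1 q1.1 * z.2 q1.2) * ((M q2.1 q2.2 * z.1 q2.1 * z.2 q2.2)
          * ((M q3.1 q3.2 * z.1 q3.1 * z.2 q3.2) * (M q4.1 q4.2 * z.1 q4.1 * z.2 q4.2)))
        ∂((Measure.pi fun _ : Fin p => gaussianReal 0 1).prod
          (Measure.pi fun _ : Fin p => gaussianReal 0 1))
      = (M q1.1 q1.2 * M q2.1 q2.2 * M q3.1 q3.2 * M q4.1 q4.2)
          * (Wd q1.1 q2.1 q3.1 q4.1 * Wd q1.2 q2.2 q3.2 q4.2) := by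
  have hpt : ∀ z : (Fin p → ℝ) × (Fin p → ℝ),
      (M q1.1 q1.2 * z.1 q1.1 * z.2 q1.2) * ((M q2.1 q2.2 * z.1 q2.1 * z.2 q2.2)
        * ((M q3.1 q3.2 * z.1 q3.1 * z.2 q3.2) * (M q4.1 q4.2 * z.1 q4.1 * z.2 q4.2)))
      = (M q1.1 q1.2 * M q2.1 q2.2 * M q3.1 q3.2 * M q4.1 q4.2)
          * ((z.1 q1.1 * z.1 q2.1 * z.1 q3.1 * z.1 q4.1)
            * (z.2 q1.2 * z.2 q2.2 * z.2 q3.2 * z.2 q4.2)) := fun z => by ring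
  simp only [hpt]
  rw [integral_const_mul, integral_prod_mul (f := fun x : Fin p → ℝ => x q1.1 * x q2.1 * x q3.1 * x q4.1)
    (g := fun y : Fin p → ℝ => y q1.2 * y q2.2 * y q3.2 * y q4.2),
    isserlis4', isserlis4']

lemma integrable_term {p : ℕ} (M : Matrix (Fin p) (Fin p) ℝ) (q1 q2 q3 q4 : Fin p × Fin p) :
    Integrable (fun z : (Fin p → ℝ) × (Fin p → ℝ) =>
        (M q1.1 q1.2 * z.1 q1.1 * z.2 q1.2) * ((M q2.1 q2.2 * z.1 q2.1 * z.2 q2.2)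
          * ((M q3.1 q3.2 * z.1 q3.1 * z.2 q3.2) * (M q4.1 q4.2 * z.1 q4.1 * z.2 q4.2))))
      ((Measure.pi fun _ : Fin p => gaussianReal 0 1).prod
        (Measure.pi fun _ : Fin p => gaussianReal 0 1)) := by
  have h := (((integrable_four q1.1 q2.1 q3.1 q4.1).mul_prod
    (integrable_four q1.2 q2.2 q3.2 q4.2)).const_mul
      (M q1.1 q1.2 * M q2.1 q2.2 * M q3.1 q3.2 * M q4.1 q4.2))
  exact h.congr (Filter.Eventually.of_forall fun z => by simp only; ring)

lemma integral_bilinear_sum {p : ℕ} (M : Matrix (Fin p) (Fin p) ℝ) :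
    ∫ z : (Fin p → ℝ) × (Fin p → ℝ), (z.1 ⬝ᵥ M *ᵥ z.2) ^ 4
        ∂((Measure.pi fun _ : Fin p => gaussianReal 0 1).prod
          (Measure.pi fun _ : Fin p => gaussianReal 0 1))
      = ∑ q1 : Fin p × Fin p, ∑ q2 : Fin p × Fin p, ∑ q3 : Fin p × Fin p, ∑ q4 : Fin p × Fin p,
          (M q1.1 q1.2 * M q2.1 q2.2 * M q3.1 q3.2 * M q4.1 q4.2)
            * (Wd q1.1 q2.1 q3.1 q4.1 * Wd q1.2 q2.2 q3.2 q4.2) := by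
  have hbody : ∀ z : (Fin p → ℝ) × (Fin p → ℝ), (z.1 ⬝ᵥ M *ᵥ z.2) ^ 4
      = ∑ q1 : Fin p × Fin p, ∑ q2 : Fin p × Fin p, ∑ q3 : Fin p × Fin p, ∑ q4 : Fin p × Fin p,
          (M q1.1 q1.2 * z.1 q1.1 * z.2 q1.2) * ((M q2.1 q2.2 * z.1 q2.1 * z.2 q2.2)
            * ((M q3.1 q3.2 * z.1 q3.1 * z.2 q3.2) * (M q4.1 q4.2 * z.1 q4.1 * z.2 q4.2))) := by
    intro z
    rw [dot_eq M z.1 z.2, sum_pow_four]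
  simp only [hbody]
  rw [integral_finset_sum _ (fun q1 _ => integrable_finset_sum _ (fun q2 _ =>
    integrable_finset_sum _ (fun q3 _ => integrable_finset_sum _ (fun q4 _ =>
      integrable_term M q1 q2 q3 q4))))]
  refine Finset.sum_congr rfl fun q1 _ => ?_
  rw [integral_finset_sum _ (fun q2 _ => integrable_finset_sum _ (fun q3 _ =>
    integrable_finset_sum _ (fun q4 _ => integrable_term M q1 q2 q3 q4)))]
  refine Finset.sum_congr rfl fun q2 _ => ?_
  rw [integral_finset_sum _ (fun q3 _ => integrable_finset_sum _ (fun q4 _ =>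
    integrable_term M q1 q2 q3 q4))]
  refine Finset.sum_congr rfl fun q3 _ => ?_
  rw [integral_finset_sum _ (fun q4 _ => integrable_term M q1 q2 q3 q4)]
  exact Finset.sum_congr rfl fun q4 _ => integral_term M q1 q2 q3 q4

end GbMain


namespace GbAlg
open GbMain
variable {p : ℕ}

lemma sw23 (F : Fin p → Fin p → Fin p → Fin p → ℝ) :
    ∑ a, ∑ b, ∑ c, ∑ d, F a b c d = ∑ a, ∑ c, ∑ b, ∑ d, F a b c d :=
  Finset.sum_congr rfl fun _ _ => Finset.sum_comm

lemma sw34 (F : Fin p → Fin p → Fin p → Fin p → ℝ) :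
    ∑ a, ∑ b, ∑ c, ∑ d, F a b c d = ∑ a, ∑ b, ∑ d, ∑ c, F a b c d :=
  Finset.sum_congr rfl fun _ _ => Finset.sum_congr rfl fun _ _ => Finset.sum_comm

lemma sum4_factor (f g : Fin p → Fin p → ℝ) :
    ∑ a, ∑ b, ∑ c, ∑ d, f a b * g c d = (∑ a, ∑ b, f a b) * (∑ c, ∑ d, g c d) := by
  rw [Finset.sum_mul_sum]
  refine Finset.sum_congr rfl fun a _ => ?_
  rw [Finset.sum_comm]
  refine Finset.sum_congr rfl fun c _ => ?_
  rw [Finset.sum_mul_sum]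

lemma trace1_eq (M : Matrix (Fin p) (Fin p) ℝ) :
    (M * Mᵀ).trace = ∑ a, ∑ b, M a b * M a b := by
  simp [Matrix.trace, Matrix.mul_apply, Matrix.diag, Matrix.transpose_apply]

lemma trace2_eq (M : Matrix (Fin p) (Fin p) ℝ) :
    ((M * Mᵀ) ^ 2).trace = ∑ a, ∑ c, ∑ b, ∑ d, M a b * M c b * (M c d * M a d) := by
  have h1 : ((M * Mᵀ) ^ 2).trace
      = ∑ a, ∑ c, (∑ b, M a b * M c b) * (∑ d, M c d * M a d) := by
    rw [pow_two]
    simp [Matrix.trace, Matrix.mul_apply, Matrix.diag, Matrix.transpose_apply]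
  rw [h1]
  exact Finset.sum_congr rfl fun a _ => Finset.sum_congr rfl fun c _ => Finset.sum_mul_sum _ _ _ _

lemma h11 (M : Matrix (Fin p) (Fin p) ℝ) :
    ∑ q1 : Fin p × Fin p, ∑ q2 : Fin p × Fin p, ∑ q3 : Fin p × Fin p, ∑ q4 : Fin p × Fin p,
    (M q1.1 q1.2 * M q2.1 q2.2 * M q3.1 q3.2 * M q4.1 q4.2) *
      ((if (q1.1 = q2.1) then (1:ℝ) else 0) * (if (q3.1 = q4.1) then (1:ℝ) else 0) *
       ((if (q1.2 = q2.2) then (1:ℝ) else 0) * (if (q3.2 = q4.2) then (1:ℝ) else 0)))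
    = (∑ a, ∑ b, M a b * M a b) * (∑ a, ∑ b, M a b * M a b) := by
  simp only [Fintype.sum_prod_type]
  simp only [mul_ite, ite_mul, mul_zero, zero_mul, mul_one, one_mul,
    Finset.sum_ite_eq, Finset.sum_ite_eq', Finset.mem_univ, if_true,
    Finset.sum_const_zero, add_zero, zero_add, Finset.sum_ite_irrel]
  rw [← sum4_factor (fun a b => M a b * M a b) (fun c d => M c d * M c d)]
  exact Finset.sum_congr rfl fun _ _ => Finset.sum_congr rfl fun _ _ =>
    Finset.sum_congr rfl fun _ _ => Finset.sum_congr rfl fun _ _ => by ring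

lemma h12 (M : Matrix (Fin p) (Fin p) ℝ) :
    ∑ q1 : Fin p × Fin p, ∑ q2 : Fin p × Fin p, ∑ q3 : Fin p × Fin p, ∑ q4 : Fin p × Fin p,
    (M q1.1 q1.2 * M q2.1 q2.2 * M q3.1 q3.2 * M q4.1 q4.2) *
      ((if (q1.1 = q2.1) then (1:ℝ) else 0) * (if (q3.1 = q4.1) then (1:ℝ) else 0) *
       ((if (q1.2 = q3.2) then (1:ℝ) else 0) * (if (q2.2 = q4.2) then (1:ℝ) else 0)))
    = ∑ a, ∑ c, ∑ b, ∑ d, M a b * M c b * (M c d * M a d) := by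
  simp only [Fintype.sum_prod_type]
  simp only [mul_ite, ite_mul, mul_zero, zero_mul, mul_one, one_mul,
    Finset.sum_ite_eq, Finset.sum_ite_eq', Finset.mem_univ, if_true,
    Finset.sum_const_zero, add_zero, zero_add, Finset.sum_ite_irrel]
  refine Eq.trans (sw34 _) ?_
  refine Eq.trans (sw23 _) ?_
  exact Finset.sum_congr rfl fun _ _ => Finset.sum_congr rfl fun _ _ =>
    Finset.sum_congr rfl fun _ _ => Finset.sum_congr rfl fun _ _ => by ring

lemma h13 (M : Matrix (Fin p) (Fin p) ℝ) :
    ∑ q1 : Fin p × Fin p, ∑ q2 : Fin p × Fin p, ∑ q3 : Fin p × Fin p, ∑ q4 : Fin p × Fin p,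
    (M q1.1 q1.2 * M q2.1 q2.2 * M q3.1 q3.2 * M q4.1 q4.2) *
      ((if (q1.1 = q2.1) then (1:ℝ) else 0) * (if (q3.1 = q4.1) then (1:ℝ) else 0) *
       ((if (q1.2 = q4.2) then (1:ℝ) else 0) * (if (q2.2 = q3.2) then (1:ℝ) else 0)))
    = ∑ a, ∑ c, ∑ b, ∑ d, M a b * M c b * (M c d * M a d) := by
  simp only [Fintype.sum_prod_type]
  simp only [mul_ite, ite_mul, mul_zero, zero_mul, mul_one, one_mul,
    Finset.sum_ite_eq, Finset.sum_ite_eq', Finset.mem_univ, if_true,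
    Finset.sum_const_zero, add_zero, zero_add, Finset.sum_ite_irrel]
  refine Eq.trans (sw34 _) ?_
  refine Eq.trans (sw23 _) ?_
  exact Finset.sum_congr rfl fun _ _ => Finset.sum_congr rfl fun _ _ =>
    Finset.sum_congr rfl fun _ _ => Finset.sum_congr rfl fun _ _ => by ring

lemma h21 (M : Matrix (Fin p) (Fin p) ℝ) :
    ∑ q1 : Fin p × Fin p, ∑ q2 : Fin p × Fin p, ∑ q3 : Fin p × Fin p, ∑ q4 : Fin p × Fin p,
    (M q1.1 q1.2 * M q2.1 q2.2 * M q3.1 q3.2 * M q4.1 q4.2) *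
      ((if (q1.1 = q3.1) then (1:ℝ) else 0) * (if (q2.1 = q4.1) then (1:ℝ) else 0) *
       ((if (q1.2 = q2.2) then (1:ℝ) else 0) * (if (q3.2 = q4.2) then (1:ℝ) else 0)))
    = ∑ a, ∑ c, ∑ b, ∑ d, M a b * M c b * (M c d * M a d) := by
  simp only [Fintype.sum_prod_type]
  simp only [mul_ite, ite_mul, mul_zero, zero_mul, mul_one, one_mul,
    Finset.sum_ite_eq, Finset.sum_ite_eq', Finset.mem_univ, if_true,
    Finset.sum_const_zero, add_zero, zero_add, Finset.sum_ite_irrel]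
  refine Eq.trans (sw23 _) ?_
  exact Finset.sum_congr rfl fun _ _ => Finset.sum_congr rfl fun _ _ =>
    Finset.sum_congr rfl fun _ _ => Finset.sum_congr rfl fun _ _ => by ring

lemma h22 (M : Matrix (Fin p) (Fin p) ℝ) :
    ∑ q1 : Fin p × Fin p, ∑ q2 : Fin p × Fin p, ∑ q3 : Fin p × Fin p, ∑ q4 : Fin p × Fin p,
    (M q1.1 q1.2 * M q2.1 q2.2 * M q3.1 q3.2 * M q4.1 q4.2) *
      ((if (q1.1 = q3.1) then (1:ℝ) else 0) * (if (q2.1 = q4.1) then (1:ℝ) else 0) *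
       ((if (q1.2 = q3.2) then (1:ℝ) else 0) * (if (q2.2 = q4.2) then (1:ℝ) else 0)))
    = (∑ a, ∑ b, M a b * M a b) * (∑ a, ∑ b, M a b * M a b) := by
  simp only [Fintype.sum_prod_type]
  simp only [mul_ite, ite_mul, mul_zero, zero_mul, mul_one, one_mul,
    Finset.sum_ite_eq, Finset.sum_ite_eq', Finset.mem_univ, if_true,
    Finset.sum_const_zero, add_zero, zero_add, Finset.sum_ite_irrel]
  rw [← sum4_factor (fun a b => M a b * M a b) (fun c d => M c d * M c d)]
  exact Finset.sum_congr rfl fun _ _ => Finset.sum_congr rfl fun _ _ =>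
    Finset.sum_congr rfl fun _ _ => Finset.sum_congr rfl fun _ _ => by ring

lemma h23 (M : Matrix (Fin p) (Fin p) ℝ) :
    ∑ q1 : Fin p × Fin p, ∑ q2 : Fin p × Fin p, ∑ q3 : Fin p × Fin p, ∑ q4 : Fin p × Fin p,
    (M q1.1 q1.2 * M q2.1 q2.2 * M q3.1 q3.2 * M q4.1 q4.2) *
      ((if (q1.1 = q3.1) then (1:ℝ) else 0) * (if (q2.1 = q4.1) then (1:ℝ) else 0) *
       ((if (q1.2 = q4.2) then (1:ℝ) else 0) * (if (q2.2 = q3.2) then (1:ℝ) else 0)))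
    = ∑ a, ∑ c, ∑ b, ∑ d, M a b * M c b * (M c d * M a d) := by
  simp only [Fintype.sum_prod_type]
  simp only [mul_ite, ite_mul, mul_zero, zero_mul, mul_one, one_mul,
    Finset.sum_ite_eq, Finset.sum_ite_eq', Finset.mem_univ, if_true,
    Finset.sum_const_zero, add_zero, zero_add, Finset.sum_ite_irrel]
  refine Eq.trans (sw23 _) ?_
  exact Finset.sum_congr rfl fun _ _ => Finset.sum_congr rfl fun _ _ =>
    Finset.sum_congr rfl fun _ _ => Finset.sum_congr rfl fun _ _ => by ring

lemma h31 (M : Matrix (Fin p) (Fin p) ℝ) :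
    ∑ q1 : Fin p × Fin p, ∑ q2 : Fin p × Fin p, ∑ q3 : Fin p × Fin p, ∑ q4 : Fin p × Fin p,
    (M q1.1 q1.2 * M q2.1 q2.2 * M q3.1 q3.2 * M q4.1 q4.2) *
      ((if (q1.1 = q4.1) then (1:ℝ) else 0) * (if (q2.1 = q3.1) then (1:ℝ) else 0) *
       ((if (q1.2 = q2.2) then (1:ℝ) else 0) * (if (q3.2 = q4.2) then (1:ℝ) else 0)))
    = ∑ a, ∑ c, ∑ b, ∑ d, M a b * M c b * (M c d * M a d) := by
  simp only [Fintype.sum_prod_type]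
  simp only [mul_ite, ite_mul, mul_zero, zero_mul, mul_one, one_mul,
    Finset.sum_ite_eq, Finset.sum_ite_eq', Finset.mem_univ, if_true,
    Finset.sum_const_zero, add_zero, zero_add, Finset.sum_ite_irrel]
  refine Eq.trans (sw23 _) ?_
  exact Finset.sum_congr rfl fun _ _ => Finset.sum_congr rfl fun _ _ =>
    Finset.sum_congr rfl fun _ _ => Finset.sum_congr rfl fun _ _ => by ring

lemma h32 (M : Matrix (Fin p) (Fin p) ℝ) :
    ∑ q1 : Fin p × Fin p, ∑ q2 : Fin p × Fin p, ∑ q3 : Fin p × Fin p, ∑ q4 : Fin p × Fin p,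
    (M q1.1 q1.2 * M q2.1 q2.2 * M q3.1 q3.2 * M q4.1 q4.2) *
      ((if (q1.1 = q4.1) then (1:ℝ) else 0) * (if (q2.1 = q3.1) then (1:ℝ) else 0) *
       ((if (q1.2 = q3.2) then (1:ℝ) else 0) * (if (q2.2 = q4.2) then (1:ℝ) else 0)))
    = ∑ a, ∑ c, ∑ b, ∑ d, M a b * M c b * (M c d * M a d) := by
  simp only [Fintype.sum_prod_type]
  simp only [mul_ite, ite_mul, mul_zero, zero_mul, mul_one, one_mul,
    Finset.sum_ite_eq, Finset.sum_ite_eq', Finset.mem_univ, if_true,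
    Finset.sum_const_zero, add_zero, zero_add, Finset.sum_ite_irrel]
  refine Eq.trans (sw23 _) ?_
  exact Finset.sum_congr rfl fun _ _ => Finset.sum_congr rfl fun _ _ =>
    Finset.sum_congr rfl fun _ _ => Finset.sum_congr rfl fun _ _ => by ring

lemma h33 (M : Matrix (Fin p) (Fin p) ℝ) :
    ∑ q1 : Fin p × Fin p, ∑ q2 : Fin p × Fin p, ∑ q3 : Fin p × Fin p, ∑ q4 : Fin p × Fin p,
    (M q1.1 q1.2 * M q2.1 q2.2 * M q3.1 q3.2 * M q4.1 q4.2) *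
      ((if (q1.1 = q4.1) then (1:ℝ) else 0) * (if (q2.1 = q3.1) then (1:ℝ) else 0) *
       ((if (q1.2 = q4.2) then (1:ℝ) else 0) * (if (q2.2 = q3.2) then (1:ℝ) else 0)))
    = (∑ a, ∑ b, M a b * M a b) * (∑ a, ∑ b, M a b * M a b) := by
  simp only [Fintype.sum_prod_type]
  simp only [mul_ite, ite_mul, mul_zero, zero_mul, mul_one, one_mul,
    Finset.sum_ite_eq, Finset.sum_ite_eq', Finset.mem_univ, if_true,
    Finset.sum_const_zero, add_zero, zero_add, Finset.sum_ite_irrel]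
  rw [← sum4_factor (fun a b => M a b * M a b) (fun c d => M c d * M c d)]
  exact Finset.sum_congr rfl fun _ _ => Finset.sum_congr rfl fun _ _ =>
    Finset.sum_congr rfl fun _ _ => Finset.sum_congr rfl fun _ _ => by ring


theorem master (M : Matrix (Fin p) (Fin p) ℝ) :
    ∑ q1 : Fin p × Fin p, ∑ q2 : Fin p × Fin p, ∑ q3 : Fin p × Fin p, ∑ q4 : Fin p × Fin p,
      (M q1.1 q1.2 * M q2.1 q2.2 * M q3.1 q3.2 * M q4.1 q4.2)
        * (Wd q1.1 q2.1 q3.1 q4.1 * Wd q1.2 q2.2 q3.2 q4.2)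
    = 3 * (M * Mᵀ).trace ^ 2 + 6 * ((M * Mᵀ) ^ 2).trace := by
  have expand : ∀ q1 q2 q3 q4 : Fin p × Fin p,
      (M q1.1 q1.2 * M q2.1 q2.2 * M q3.1 q3.2 * M q4.1 q4.2)
        * (Wd q1.1 q2.1 q3.1 q4.1 * Wd q1.2 q2.2 q3.2 q4.2)
      = (M q1.1 q1.2 * M q2.1 q2.2 * M q3.1 q3.2 * M q4.1 q4.2) *
        ((if (q1.1 = q2.1) then (1:ℝ) else 0) * (if (q3.1 = q4.1) then (1:ℝ) else 0) *
         ((if (q1.2 = q2.2) then (1:ℝ) else 0) * (if (q3.2 = q4.2) then (1:ℝ) else 0)))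
      + (M q1.1 q1.2 * M q2.1 q2.2 * M q3.1 q3.2 * M q4.1 q4.2) *
        ((if (q1.1 = q2.1) then (1:ℝ) else 0) * (if (q3.1 = q4.1) then (1:ℝ) else 0) *
         ((if (q1.2 = q3.2) then (1:ℝ) else 0) * (if (q2.2 = q4.2) then (1:ℝ) else 0)))
      + (M q1.1 q1.2 * M q2.1 q2.2 * M q3.1 q3.2 * M q4.1 q4.2) *
        ((if (q1.1 = q2.1) then (1:ℝ) else 0) * (if (q3.1 = q4.1) then (1:ℝ) else 0) *
         ((if (q1.2 = q4.2) then (1:ℝ) else 0) * (if (q2.2 = q3.2) then (1:ℝ) else 0)))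
      + (M q1.1 q1.2 * M q2.1 q2.2 * M q3.1 q3.2 * M q4.1 q4.2) *
        ((if (q1.1 = q3.1) then (1:ℝ) else 0) * (if (q2.1 = q4.1) then (1:ℝ) else 0) *
         ((if (q1.2 = q2.2) then (1:ℝ) else 0) * (if (q3.2 = q4.2) then (1:ℝ) else 0)))
      + (M q1.1 q1.2 * M q2.1 q2.2 * M q3.1 q3.2 * M q4.1 q4.2) *
        ((if (q1.1 = q3.1) then (1:ℝ) else 0) * (if (q2.1 = q4.1) then (1:ℝ) else 0) *
         ((if (q1.2 = q3.2) then (1:ℝ) else 0) * (if (q2.2 = q4.2) then (1:ℝ) else 0)))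
      + (M q1.1 q1.2 * M q2.1 q2.2 * M q3.1 q3.2 * M q4.1 q4.2) *
        ((if (q1.1 = q3.1) then (1:ℝ) else 0) * (if (q2.1 = q4.1) then (1:ℝ) else 0) *
         ((if (q1.2 = q4.2) then (1:ℝ) else 0) * (if (q2.2 = q3.2) then (1:ℝ) else 0)))
      + (M q1.1 q1.2 * M q2.1 q2.2 * M q3.1 q3.2 * M q4.1 q4.2) *
        ((if (q1.1 = q4.1) then (1:ℝ) else 0) * (if (q2.1 = q3.1) then (1:ℝ) else 0) *
         ((if (q1.2 = q2.2) then (1:ℝ) else 0) * (if (q3.2 = q4.2) then (1:ℝ) else 0)))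
      + (M q1.1 q1.2 * M q2.1 q2.2 * M q3.1 q3.2 * M q4.1 q4.2) *
        ((if (q1.1 = q4.1) then (1:ℝ) else 0) * (if (q2.1 = q3.1) then (1:ℝ) else 0) *
         ((if (q1.2 = q3.2) then (1:ℝ) else 0) * (if (q2.2 = q4.2) then (1:ℝ) else 0)))
      + (M q1.1 q1.2 * M q2.1 q2.2 * M q3.1 q3.2 * M q4.1 q4.2) *
        ((if (q1.1 = q4.1) then (1:ℝ) else 0) * (if (q2.1 = q3.1) then (1:ℝ) else 0) *
         ((if (q1.2 = q4.2) then (1:ℝ) else 0) * (if (q2.2 = q3.2) then (1:ℝ) else 0))) := by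
    intro q1 q2 q3 q4
    simp only [Wd]
    ring
  simp only [expand]
  simp only [Finset.sum_add_distrib]
  rw [h11 M, h12 M, h13 M, h21 M, h22 M, h23 M, h31 M, h32 M, h33 M, trace1_eq, trace2_eq]
  ring

end GbAlg


namespace GbIneq
variable {p : ℕ}

lemma trace1_eq' (M : Matrix (Fin p) (Fin p) ℝ) :
    (M * Mᵀ).trace = ∑ a, ∑ b, M a b * M a b := by
  simp [Matrix.trace, Matrix.mul_apply, Matrix.diag, Matrix.transpose_apply]

lemma trace2_le (M : Matrix (Fin p) (Fin p) ℝ) :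
    ((M * Mᵀ) ^ 2).trace ≤ (M * Mᵀ).trace ^ 2 := by
  have h1 : ((M * Mᵀ) ^ 2).trace
      = ∑ a, ∑ c, (∑ b, M a b * M c b) * (∑ d, M c d * M a d) := by
    rw [pow_two]
    simp [Matrix.trace, Matrix.mul_apply, Matrix.diag, Matrix.transpose_apply]
  rw [h1, trace1_eq']
  have key : ∀ a c : Fin p, (∑ b, M a b * M c b) * (∑ d, M c d * M a d)
      ≤ (∑ b, M a b ^ 2) * (∑ b, M c b ^ 2) := by
    intro a c
    have h2 : (∑ d, M c d * M a d) = ∑ b, M a b * M c b :=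
      Finset.sum_congr rfl fun b _ => mul_comm _ _
    rw [h2, ← sq]
    exact Finset.sum_mul_sq_le_sq_mul_sq Finset.univ (fun b => M a b) (fun b => M c b)
  calc ∑ a, ∑ c, (∑ b, M a b * M c b) * (∑ d, M c d * M a d)
      ≤ ∑ a, ∑ c, (∑ b, M a b ^ 2) * (∑ b, M c b ^ 2) :=
        Finset.sum_le_sum fun a _ => Finset.sum_le_sum fun c _ => key a c
    _ = (∑ a, ∑ b, M a b * M a b) ^ 2 := by
        rw [show (∑ a, ∑ b, M a b * M a b) = ∑ a, ∑ b, M a b ^ 2 from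
          Finset.sum_congr rfl fun a _ => Finset.sum_congr rfl fun b _ => (sq (M a b)).symm ▸ rfl,
          sq, Finset.sum_mul_sum]

end GbIneq


open GbAux GbAux2 GbPi GbIss GbMain GbAlg GbIneq in
/-- **Fourth moment of a Gaussian bilinear form.** For independent standard
Gaussian vectors `u, v` in `ℝᵖ` and `M ∈ ℝ^{p×p}`:
`E[(uᵀMv)⁴] = 3(tr(MMᵀ))² + 6 tr((MMᵀ)²) ≤ 9‖M‖_F⁴`. -/
theorem gaussian_bilinear_fourth_moment
    {Ω : Type*} [MeasurableSpace Ω] (μ : Measure Ω) [IsProbabilityMeasure μ]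
    {p : ℕ} (hp : 1 ≤ p)
    (u v : Ω → Fin p → ℝ)
    (hmu : Measurable u) (hmv : Measurable v)
    (hindep : IndepFun u v μ)
    (hlawu : Measure.map u μ =
      Measure.pi (fun _ : Fin p => ProbabilityTheory.gaussianReal 0 1))
    (hlawv : Measure.map v μ =
      Measure.pi (fun _ : Fin p => ProbabilityTheory.gaussianReal 0 1))
    (M : Matrix (Fin p) (Fin p) ℝ) :
    (∫ ω, (u ω ⬝ᵥ (M *ᵥ v ω)) ^ 4 ∂μ) =
        3 * (M * Mᵀ).trace ^ 2 + 6 * ((M * Mᵀ) ^ 2).trace ∧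
      (∫ ω, (u ω ⬝ᵥ (M *ᵥ v ω)) ^ 4 ∂μ) ≤ 9 * frobNorm M ^ 4 := by
  have hmap : Measure.map (fun ω => (u ω, v ω)) μ
      = (Measure.pi fun _ : Fin p => gaussianReal 0 1).prod
          (Measure.pi fun _ : Fin p => gaussianReal 0 1) := by
    have h := (indepFun_iff_map_prod_eq_prod_map_map hmu.aemeasurable
      hmv.aemeasurable).mp hindep
    rw [hlawu, hlawv] at h
    exact h
  have hFm : Measurable (fun z : (Fin p → ℝ) × (Fin p → ℝ) => (z.1 ⬝ᵥ M *ᵥ z.2) ^ 4) := by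
    have h0 : (fun z : (Fin p → ℝ) × (Fin p → ℝ) => z.1 ⬝ᵥ M *ᵥ z.2)
        = fun z => ∑ q : Fin p × Fin p, M q.1 q.2 * z.1 q.1 * z.2 q.2 := by
      funext z; exact dot_eq M z.1 z.2
    refine Measurable.pow_const ?_ 4
    rw [h0]
    exact Finset.measurable_sum _ fun q _ =>
      ((measurable_const.mul ((measurable_pi_apply q.1).comp measurable_fst)).mul
        ((measurable_pi_apply q.2).comp measurable_snd))
  have E : (∫ ω, (u ω ⬝ᵥ (M *ᵥ v ω)) ^ 4 ∂μ)
      = 3 * (M * Mᵀ).trace ^ 2 + 6 * ((M * Mᵀ) ^ 2).trace := by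
    have h1 : (∫ ω, (u ω ⬝ᵥ (M *ᵥ v ω)) ^ 4 ∂μ)
        = ∫ z : (Fin p → ℝ) × (Fin p → ℝ), (z.1 ⬝ᵥ M *ᵥ z.2) ^ 4
            ∂(Measure.map (fun ω => (u ω, v ω)) μ) :=
      (integral_map (hmu.prodMk hmv).aemeasurable hFm.aestronglyMeasurable).symm
    rw [h1, hmap, integral_bilinear_sum, master]
  refine ⟨E, ?_⟩
  rw [E]
  have hfrob : frobNorm M ^ 4 = (M * Mᵀ).trace ^ 2 := by
    rw [frobNorm, show (4:ℕ) = 2 * 2 from rfl, pow_mul,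
      Real.sq_sqrt (by positivity), trace1_eq']
    congr 1
    exact Finset.sum_congr rfl fun a _ => Finset.sum_congr rfl fun b _ => by rw [sq]
  rw [hfrob]
  have := trace2_le M
  nlinarith [sq_nonneg ((M * Mᵀ).trace)]
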